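/- Let S ≠ T be k-subsets of [n] and let C be a connected component of the multigraph h(S,T) with at least one edge. Let x_max(C) be the maximum element of C ∩ ([n]∖[k]) and y_min(C) the minimum element of C ∩ [k]. Then x_max(C) and y_min(C) are adjacent in h(S,T), i.e., (x_max(C), y_min(C)) ∈ f(S) ∪ f(T). -/

import Mathlib

def matchF (k : ℕ) (S : Finset ℕ) : Finset (ℕ × ℕ) :=
  (((S \ Finset.Icc 1 k).sort (· ≤ ·)).reverse.zip
    ((Finset.Icc 1 k \ S).sort (· ≤ ·))).toFinset

def hGraph (k : ℕ) (S T : Finset ℕ) : SimpleGraph ℕ where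
  Adj u v := u ≠ v ∧
    ((u, v) ∈ matchF k S ∪ matchF k T ∨ (v, u) ∈ matchF k S ∪ matchF k T)
  symm := by constructor; rintro u v ⟨h1, h2⟩; exact ⟨h1.symm, h2.elim Or.inr Or.inl⟩
  loopless := by constructor; rintro u ⟨h1, _⟩; exact h1 rfl

/-! ### Auxiliary lemmas -/

lemma zip_getElem? {α β : Type*} :
    ∀ (l₁ : List α) (l₂ : List β) (p : α × β), p ∈ l₁.zip l₂ →
      ∃ i : ℕ, l₁[i]? = some p.1 ∧ l₂[i]? = some p.2 := by
  intro l₁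
  induction l₁ with
  | nil => intro l₂ p h; simp [List.zip] at h
  | cons a l ih =>
    intro l₂ p h
    cases l₂ with
    | nil => simp [List.zip] at h
    | cons b l₂ =>
      rw [List.zip_cons_cons, List.mem_cons] at h
      rcases h with h | h
      · exact ⟨0, by simp [h]⟩
      · obtain ⟨i, h1, h2⟩ := ih l₂ p h
        exact ⟨i + 1, by simpa using h1, by simpa using h2⟩

lemma zip_fun_left {α β : Type*} {l₁ : List α} {l₂ : List β} (hnd : l₁.Nodup)
    {x : α} {y y' : β} (h : (x, y) ∈ l₁.zip l₂) (h' : (x, y') ∈ l₁.zip l₂) : y = y' := by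
  obtain ⟨i, hi1, hi2⟩ := zip_getElem? _ _ _ h
  obtain ⟨j, hj1, hj2⟩ := zip_getElem? _ _ _ h'
  have hlen : i < l₁.length := (List.getElem?_eq_some_iff.1 hi1).1
  have hij : i = j := (List.getElem?_inj hlen hnd).1 (hi1.trans hj1.symm)
  subst hij
  rw [hi2] at hj2
  exact Option.some_inj.1 hj2

lemma zip_fun_right {α β : Type*} {l₁ : List α} {l₂ : List β} (hnd : l₂.Nodup)
    {x x' : α} {y : β} (h : (x, y) ∈ l₁.zip l₂) (h' : (x', y) ∈ l₁.zip l₂) : x = x' := by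
  obtain ⟨i, hi1, hi2⟩ := zip_getElem? _ _ _ h
  obtain ⟨j, hj1, hj2⟩ := zip_getElem? _ _ _ h'
  have hlen : i < l₂.length := (List.getElem?_eq_some_iff.1 hi2).1
  have hij : i = j := (List.getElem?_inj hlen hnd).1 (hi2.trans hj2.symm)
  subst hij
  rw [hi1] at hj1
  exact Option.some_inj.1 hj1

lemma zip_mono {l₁ l₂ : List ℕ} (h₁ : l₁.Pairwise (· > ·)) (h₂ : l₂.Pairwise (· < ·))
    {x y x' y' : ℕ} (hm : (x, y) ∈ l₁.zip l₂) (hm' : (x', y') ∈ l₁.zip l₂)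
    (hxx : x' < x) : y < y' := by
  obtain ⟨i, hi1, hi2⟩ := zip_getElem? _ _ _ hm
  obtain ⟨j, hj1, hj2⟩ := zip_getElem? _ _ _ hm'
  obtain ⟨hil, hie⟩ := List.getElem?_eq_some_iff.1 hi1
  obtain ⟨hjl, hje⟩ := List.getElem?_eq_some_iff.1 hj1
  obtain ⟨hil2, hie2⟩ := List.getElem?_eq_some_iff.1 hi2
  obtain ⟨hjl2, hje2⟩ := List.getElem?_eq_some_iff.1 hj2
  rcases lt_trichotomy i j with h | h | h
  · have := List.pairwise_iff_getElem.1 h₂ i j hil2 hjl2 h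
    rwa [hie2, hje2] at this
  · subst h; rw [hie] at hje; omega
  · have := List.pairwise_iff_getElem.1 h₁ j i hjl hil h
    rw [hje, hie] at this; omega

lemma mem_matchF {k : ℕ} {S : Finset ℕ} {x y : ℕ} :
    (x, y) ∈ matchF k S ↔ (x, y) ∈
      (((S \ Finset.Icc 1 k).sort (· ≤ ·)).reverse.zip
        ((Finset.Icc 1 k \ S).sort (· ≤ ·))) := List.mem_toFinset

lemma matchF_coords {k : ℕ} {S : Finset ℕ} {x y : ℕ} (h : (x, y) ∈ matchF k S) :
    x ∈ S ∧ x ∉ Finset.Icc 1 k ∧ y ∈ Finset.Icc 1 k ∧ y ∉ S := by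
  rw [mem_matchF] at h
  obtain ⟨h1, h2⟩ := List.of_mem_zip h
  rw [List.mem_reverse, Finset.mem_sort] at h1
  rw [Finset.mem_sort] at h2
  rw [Finset.mem_sdiff] at h1 h2
  exact ⟨h1.1, h1.2, h2.1, h2.2⟩

lemma matchF_fun₁ {k : ℕ} {S : Finset ℕ} {x y y' : ℕ}
    (h : (x, y) ∈ matchF k S) (h' : (x, y') ∈ matchF k S) : y = y' :=
  zip_fun_left (List.nodup_reverse.2 (Finset.sort_nodup _ _))
    (mem_matchF.1 h) (mem_matchF.1 h')

lemma matchF_fun₂ {k : ℕ} {S : Finset ℕ} {x x' y : ℕ}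
    (h : (x, y) ∈ matchF k S) (h' : (x', y) ∈ matchF k S) : x = x' :=
  zip_fun_right (Finset.sort_nodup _ _) (mem_matchF.1 h) (mem_matchF.1 h')

lemma matchF_mono {k : ℕ} {S : Finset ℕ} {x y x' y' : ℕ}
    (h : (x, y) ∈ matchF k S) (h' : (x', y') ∈ matchF k S) (hxx : x' < x) : y < y' :=
  zip_mono (List.pairwise_reverse.2 (Finset.sortedLT_sort _).pairwise)
    (Finset.sortedLT_sort _).pairwise (mem_matchF.1 h) (mem_matchF.1 h') hxx

/-- Core parity induction along a simple path: starting at a vertex whose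
"previous" edge came from one of the two matchings, the edges alternate, so
a path can never reach `ym` (which has no `A`-edge). -/
lemma core (k : ℕ) (S T : Finset ℕ) (A B : Finset (ℕ × ℕ))
    (hU : ∀ p : ℕ × ℕ, p ∈ matchF k S ∪ matchF k T ↔ p ∈ A ∪ B)
    (coordA : ∀ p ∈ A, k < p.1 ∧ p.2 ≤ k)
    (coordB : ∀ p ∈ B, k < p.1 ∧ p.2 ≤ k)
    (funA : ∀ {x x' y : ℕ}, (x, y) ∈ A → (x', y) ∈ A → x = x')
    (funB : ∀ {x y y' : ℕ}, (x, y) ∈ B → (x, y') ∈ B → y = y')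
    :
    ∀ (u ym : ℕ) (W : (hGraph k S T).Walk u ym), ym ≤ k → (∀ z, (z, ym) ∉ A) →
      W.IsPath →
      ((k < u ∧ ∃ z, (u, z) ∈ B ∧ z ∉ W.support) ∨
       (u ≤ k ∧ ∃ z, (z, u) ∈ A ∧ z ∉ W.support)) → False := by
  intro u ym W
  induction W with
  | nil =>
    intro hym hyA _ h
    rcases h with ⟨h1, _⟩ | ⟨_, z, hz, _⟩
    · omega
    · exact hyA z hz
  | @cons a b c hadj W ih =>
    intro hym hyA hp hyp
    rw [SimpleGraph.Walk.cons_isPath_iff] at hp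
    obtain ⟨hp', hu⟩ := hp
    obtain ⟨hne, hor⟩ := hadj
    rcases hyp with ⟨hub, z, hz, hzs⟩ | ⟨hus, z, hz, hzs⟩
    · have hzs' : z ∉ W.support := fun h => hzs (List.mem_cons_of_mem _ h)
      have huw : (a, b) ∈ A ∪ B := by
        rcases hor with h | h
        · exact (hU _).1 h
        · rcases Finset.mem_union.1 ((hU _).1 h) with h'' | h''
          · exact absurd (coordA _ h'').2 (by omega)
          · exact absurd (coordB _ h'').2 (by omega)
      rcases Finset.mem_union.1 huw with hA | hB
      · exact ih hym hyA hp' (Or.inr ⟨(coordA _ hA).2, a, hA, hu⟩)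
      · have hwz : b = z := funB hB hz
        exact hzs' (hwz ▸ W.start_mem_support)
    · have hzs' : z ∉ W.support := fun h => hzs (List.mem_cons_of_mem _ h)
      have hwu : (b, a) ∈ A ∪ B := by
        rcases hor with h | h
        · rcases Finset.mem_union.1 ((hU _).1 h) with h'' | h''
          · exact absurd (coordA _ h'').1 (by omega)
          · exact absurd (coordB _ h'').1 (by omega)
        · exact (hU _).1 h
      rcases Finset.mem_union.1 hwu with hA | hB
      · have hwz : b = z := funA hA hz
        exact hzs' (hwz ▸ W.start_mem_support)
      · exact ih hym hyA hp' (Or.inl ⟨(coordB _ hB).1, a, hB, hu⟩)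

/-- If the maximal vertex has no `B`-edge and the minimal vertex has no
`A`-edge, they cannot be connected. -/
lemma noCross (k : ℕ) (S T : Finset ℕ) (A B : Finset (ℕ × ℕ))
    (hU : ∀ p : ℕ × ℕ, p ∈ matchF k S ∪ matchF k T ↔ p ∈ A ∪ B)
    (coordA : ∀ p ∈ A, k < p.1 ∧ p.2 ≤ k)
    (coordB : ∀ p ∈ B, k < p.1 ∧ p.2 ≤ k)
    (funA : ∀ {x x' y : ℕ}, (x, y) ∈ A → (x', y) ∈ A → x = x')
    (funB : ∀ {x y y' : ℕ}, (x, y) ∈ B → (x, y') ∈ B → y = y')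
    (xm ym : ℕ) (hxm : k < xm) (hym : ym ≤ k)
    (hxB : ∀ z, (xm, z) ∉ B) (hyA : ∀ z, (z, ym) ∉ A)
    (hreach : (hGraph k S T).Reachable xm ym) : False := by
  classical
  obtain ⟨W0⟩ := hreach
  obtain ⟨W, hW⟩ := W0.toPath
  cases W with
  | nil => omega
  | @cons _ w _ hadj W' =>
    rw [SimpleGraph.Walk.cons_isPath_iff] at hW
    obtain ⟨hp', hu⟩ := hW
    obtain ⟨hne, hor⟩ := hadj
    have huw : (xm, w) ∈ A ∪ B := by
      rcases hor with h | h
      · exact (hU _).1 h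
      · rcases Finset.mem_union.1 ((hU _).1 h) with h'' | h''
        · exact absurd (coordA _ h'').2 (by omega)
        · exact absurd (coordB _ h'').2 (by omega)
    rcases Finset.mem_union.1 huw with hA | hB
    · exact core k S T A B hU coordA coordB @funA @funB w ym W' hym hyA hp'
        (Or.inr ⟨(coordA _ hA).2, xm, hA, hu⟩)
    · exact hxB w hB

lemma big_has_edge (k : ℕ) (S T : Finset ℕ) :
    ∀ x w : ℕ, k < x → (hGraph k S T).Reachable x w → x ≠ w →
      ∃ z, (x, z) ∈ matchF k S ∪ matchF k T := by
  intro x w hx hr hne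
  obtain ⟨W⟩ := hr
  cases W with
  | nil => exact absurd rfl hne
  | cons hadj W' =>
    obtain ⟨_, hor⟩ := hadj
    rcases hor with h | h
    · exact ⟨_, h⟩
    · rcases Finset.mem_union.1 h with h' | h'
      · have := (matchF_coords h').2.2.1; rw [Finset.mem_Icc] at this; omega
      · have := (matchF_coords h').2.2.1; rw [Finset.mem_Icc] at this; omega

lemma small_has_edge (k : ℕ) (S T : Finset ℕ) :
    ∀ y w : ℕ, 1 ≤ y → y ≤ k → (hGraph k S T).Reachable y w → y ≠ w →
      ∃ z, (z, y) ∈ matchF k S ∪ matchF k T := by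
  intro y w hy1 hy hr hne
  obtain ⟨W⟩ := hr
  cases W with
  | nil => exact absurd rfl hne
  | cons hadj W' =>
    obtain ⟨_, hor⟩ := hadj
    rcases hor with h | h
    · exfalso
      rcases Finset.mem_union.1 h with h' | h'
      · exact (matchF_coords h').2.1 (Finset.mem_Icc.2 ⟨hy1, hy⟩)
      · exact (matchF_coords h').2.1 (Finset.mem_Icc.2 ⟨hy1, hy⟩)
    · exact ⟨_, h⟩

/-- In any component `C` of `h(S,T)` containing at least one edge, the largest
vertex of `C ∩ ([n]∖[k])` and the smallest vertex of `C ∩ [k]` are adjacent. -/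
theorem xmax_ymin_adjacent (n k : ℕ) (hk : k ≤ n) (S T : Finset ℕ)
    (hSsub : S ⊆ Finset.Icc 1 n) (hTsub : T ⊆ Finset.Icc 1 n)
    (hScard : S.card = k) (hTcard : T.card = k) (hST : S ≠ T)
    (v : ℕ) (C : Finset ℕ)
    (hC : ∀ u, u ∈ C ↔ u ∈ Finset.Icc 1 n ∧ (hGraph k S T).Reachable v u)
    (hedge : ∃ p ∈ matchF k S ∪ matchF k T, p.1 ∈ C ∧ p.2 ∈ C) :
    ∃ x y : ℕ, (C \ Finset.Icc 1 k).max = (x : ℕ) ∧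
      (C ∩ Finset.Icc 1 k).min = (y : ℕ) ∧
      (x, y) ∈ matchF k S ∪ matchF k T := by
  classical
  obtain ⟨⟨p1, p2⟩, hpU, hp1C, hp2C⟩ := hedge
  have coordS : ∀ {x y : ℕ}, (x, y) ∈ matchF k S → k < x ∧ x ≤ n ∧ 1 ≤ y ∧ y ≤ k := by
    intro x y h
    obtain ⟨hxS, hxk, hyk, _⟩ := matchF_coords h
    have hx := hSsub hxS
    rw [Finset.mem_Icc] at hx hyk
    rw [Finset.mem_Icc] at hxk
    omega
  have coordT : ∀ {x y : ℕ}, (x, y) ∈ matchF k T → k < x ∧ x ≤ n ∧ 1 ≤ y ∧ y ≤ k := by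
    intro x y h
    obtain ⟨hxS, hxk, hyk, _⟩ := matchF_coords h
    have hx := hTsub hxS
    rw [Finset.mem_Icc] at hx hyk
    rw [Finset.mem_Icc] at hxk
    omega
  have coordU : ∀ {x y : ℕ}, (x, y) ∈ matchF k S ∪ matchF k T →
      k < x ∧ x ≤ n ∧ 1 ≤ y ∧ y ≤ k := by
    intro x y h
    rcases Finset.mem_union.1 h with h | h
    · exact coordS h
    · exact coordT h
  have edgeAdj : ∀ {x y : ℕ}, (x, y) ∈ matchF k S ∪ matchF k T →
      (hGraph k S T).Adj x y := by
    intro x y h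
    have hc := coordU h
    exact ⟨by omega, Or.inl h⟩
  have closeR : ∀ {x y : ℕ}, (x, y) ∈ matchF k S ∪ matchF k T → x ∈ C → y ∈ C := by
    intro x y h hx
    have hc := coordU h
    rw [hC] at hx ⊢
    exact ⟨Finset.mem_Icc.2 ⟨by omega, by omega⟩, hx.2.trans (edgeAdj h).reachable⟩
  have closeL : ∀ {x y : ℕ}, (x, y) ∈ matchF k S ∪ matchF k T → y ∈ C → x ∈ C := by
    intro x y h hy
    have hc := coordU h
    rw [hC] at hy ⊢
    exact ⟨Finset.mem_Icc.2 ⟨by omega, by omega⟩, hy.2.trans (edgeAdj h).symm.reachable⟩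
  have hcp := coordU hpU
  have hne1 : (C \ Finset.Icc 1 k).Nonempty :=
    ⟨p1, Finset.mem_sdiff.2 ⟨hp1C, by rw [Finset.mem_Icc]; omega⟩⟩
  have hne2 : (C ∩ Finset.Icc 1 k).Nonempty :=
    ⟨p2, Finset.mem_inter.2 ⟨hp2C, Finset.mem_Icc.2 ⟨by omega, by omega⟩⟩⟩
  set xm := (C \ Finset.Icc 1 k).max' hne1 with hxm_def
  set ym := (C ∩ Finset.Icc 1 k).min' hne2 with hym_def
  obtain ⟨hxmC, hxmk⟩ := Finset.mem_sdiff.1 (Finset.max'_mem _ hne1)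
  obtain ⟨hymC, hymk⟩ := Finset.mem_inter.1 (Finset.min'_mem _ hne2)
  have hxmn : xm ∈ Finset.Icc 1 n := ((hC xm).1 hxmC).1
  rw [Finset.mem_Icc] at hxmn hymk
  rw [Finset.mem_Icc] at hxmk
  have hkxm : k < xm := by omega
  have reach : ∀ a ∈ C, ∀ b ∈ C, (hGraph k S T).Reachable a b := by
    intro a ha b hb
    exact ((hC a).1 ha).2.symm.trans ((hC b).1 hb).2
  have hxe : ∃ z, (xm, z) ∈ matchF k S ∪ matchF k T :=
    big_has_edge k S T xm p2 hkxm (reach _ hxmC _ hp2C) (by omega)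
  have hye : ∃ z, (z, ym) ∈ matchF k S ∪ matchF k T :=
    small_has_edge k S T ym p1 (by omega) (by omega) (reach _ hymC _ hp1C) (by omega)
  have le_xm : ∀ u ∈ C, k < u → u ≤ xm := fun u hu hk' =>
    Finset.le_max' _ u (Finset.mem_sdiff.2 ⟨hu, by rw [Finset.mem_Icc]; omega⟩)
  have ym_le : ∀ u ∈ C, 1 ≤ u → u ≤ k → ym ≤ u := fun u hu h1 h2 =>
    Finset.min'_le _ u (Finset.mem_inter.2 ⟨hu, Finset.mem_Icc.2 ⟨h1, h2⟩⟩)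
  have sameM : ∀ R : Finset ℕ, matchF k R ⊆ matchF k S ∪ matchF k T →
      ∀ a b : ℕ, (xm, a) ∈ matchF k R → (b, ym) ∈ matchF k R → (xm, ym) ∈ matchF k R := by
    intro R hsub a b hA hB
    have haC : a ∈ C := closeR (hsub hA) hxmC
    have hbC : b ∈ C := closeL (hsub hB) hymC
    have hak : a ∈ Finset.Icc 1 k := (matchF_coords hA).2.2.1
    rw [Finset.mem_Icc] at hak
    have hyma : ym ≤ a := ym_le a haC hak.1 hak.2
    have hbk : b ∉ Finset.Icc 1 k := (matchF_coords hB).2.1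
    rw [Finset.mem_Icc] at hbk
    have hb1 : 1 ≤ b ∧ b ≤ n := by
      have := ((hC b).1 hbC).1; rwa [Finset.mem_Icc] at this
    have hbxm : b ≤ xm := le_xm b hbC (by omega)
    rcases lt_or_eq_of_le hbxm with hlt | heq
    · exact absurd (matchF_mono hA hB hlt) (by omega)
    · rwa [heq] at hB
  have coordA' : ∀ p ∈ matchF k S, k < p.1 ∧ p.2 ≤ k := by
    rintro ⟨x, y⟩ hp
    have h := coordS hp
    exact ⟨h.1, h.2.2.2⟩
  have coordB' : ∀ p ∈ matchF k T, k < p.1 ∧ p.2 ≤ k := by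
    rintro ⟨x, y⟩ hp
    have h := coordT hp
    exact ⟨h.1, h.2.2.2⟩
  have hUswap : ∀ p : ℕ × ℕ, p ∈ matchF k S ∪ matchF k T ↔ p ∈ matchF k T ∪ matchF k S :=
    fun p => by rw [Finset.union_comm]
  refine ⟨xm, ym, (Finset.coe_max' hne1).symm, (Finset.coe_min' hne2).symm, ?_⟩
  obtain ⟨a, ha⟩ := hxe
  obtain ⟨b, hb⟩ := hye
  rcases Finset.mem_union.1 ha with haS | haT <;> rcases Finset.mem_union.1 hb with hbS | hbT
  · exact Finset.mem_union_left _ (sameM S Finset.subset_union_left a b haS hbS)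
  · by_cases hxT : ∃ z, (xm, z) ∈ matchF k T
    · obtain ⟨a', ha'⟩ := hxT
      exact Finset.mem_union_right _ (sameM T Finset.subset_union_right a' b ha' hbT)
    · by_cases hyS : ∃ z, (z, ym) ∈ matchF k S
      · obtain ⟨b', hb'⟩ := hyS
        exact Finset.mem_union_left _ (sameM S Finset.subset_union_left a b' haS hb')
      · push_neg at hxT hyS
        exact (noCross k S T (matchF k S) (matchF k T) (fun p => Iff.rfl)
          coordA' coordB' (fun h h' => matchF_fun₂ h h') (fun h h' => matchF_fun₁ h h')
          xm ym hkxm (by omega) hxT hyS (reach _ hxmC _ hymC)).elim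
  · by_cases hxS : ∃ z, (xm, z) ∈ matchF k S
    · obtain ⟨a', ha'⟩ := hxS
      exact Finset.mem_union_left _ (sameM S Finset.subset_union_left a' b ha' hbS)
    · by_cases hyT : ∃ z, (z, ym) ∈ matchF k T
      · obtain ⟨b', hb'⟩ := hyT
        exact Finset.mem_union_right _ (sameM T Finset.subset_union_right a b' haT hb')
      · push_neg at hxS hyT
        exact (noCross k S T (matchF k T) (matchF k S) hUswap
          coordB' coordA' (fun h h' => matchF_fun₂ h h') (fun h h' => matchF_fun₁ h h')
          xm ym hkxm (by omega) hxS hyT (reach _ hxmC _ hymC)).elim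
  · exact Finset.mem_union_right _ (sameM T Finset.subset_union_right a b haT hbT)
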